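/- Let q, v be complex numbers with 0 < |q| < 1 and v \ne 0, let N be a positive integer, and let x_1, \ldots, x_N be complex numbers such that |q v x_i| < 1 and |q v^{-1} x_i| < 1 for every i. Then \exp\Big( \sum_{d=1}^{\infty} \frac{1}{d}\,(v^{-d} - v^{d})\, \frac{q^{d}}{(1-q^{d})^{2}} \sum_{i=1}^{N} x_i^{d} \Big) \; = \; \prod_{m=1}^{\infty} \prod_{i=1}^{N} \Big( \frac{1 - q^{m} v\, x_i}{1 - q^{m} v^{-1} x_i} \Big)^{m}, where the series on the left converges absolutely and the infinite product on the right converges. -/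

import Mathlib

open Finset

set_option maxHeartbeats 1000000

/-- Infinite product formula for the Chern-Simons partition function of the unknot:
for `0 < |q| < 1`, `v ≠ 0`, and `x_1, …, x_N` with `|q v x_i| < 1` and `|q v⁻¹ x_i| < 1`,
`exp(∑_{d≥1} (1/d)(v^{-d} - v^d) q^d/(1-q^d)^2 ∑_i x_i^d)
  = ∏_{m=1}^∞ ∏_i ((1 - q^m v x_i)/(1 - q^m v⁻¹ x_i))^m`,
the series converging absolutely and the infinite product converging. -/
theorem stmt_8 (q v : ℂ) (hq0 : 0 < ‖q‖) (hq1 : ‖q‖ < 1) (hv : v ≠ 0)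
    (N : ℕ) (hN : 0 < N) (x : Fin N → ℂ)
    (hx1 : ∀ i, ‖q * v * x i‖ < 1) (hx2 : ∀ i, ‖q * v⁻¹ * x i‖ < 1) :
    (Summable fun d : ℕ =>
      ‖1 / ((d : ℂ) + 1) * ((v⁻¹) ^ (d + 1) - v ^ (d + 1)) *
        (q ^ (d + 1) / (1 - q ^ (d + 1)) ^ 2) * ∑ i, x i ^ (d + 1)‖) ∧
    (Multipliable fun m : ℕ =>
      ∏ i, ((1 - q ^ (m + 1) * v * x i) / (1 - q ^ (m + 1) * v⁻¹ * x i)) ^ (m + 1)) ∧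
    Complex.exp (∑' d : ℕ,
        1 / ((d : ℂ) + 1) * ((v⁻¹) ^ (d + 1) - v ^ (d + 1)) *
          (q ^ (d + 1) / (1 - q ^ (d + 1)) ^ 2) * ∑ i, x i ^ (d + 1))
      = ∏' m : ℕ,
          ∏ i, ((1 - q ^ (m + 1) * v * x i) / (1 - q ^ (m + 1) * v⁻¹ * x i)) ^ (m + 1) := by
  classical
  -- the double-indexed family
  let F : ℕ × ℕ → ℂ := fun p =>
    ((p.2 : ℂ) + 1) / ((p.1 : ℂ) + 1) *
      ∑ i, ((q ^ (p.2 + 1) * v⁻¹ * x i) ^ (p.1 + 1) - (q ^ (p.2 + 1) * v * x i) ^ (p.1 + 1))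
  let g : ℕ → ℂ := fun m =>
    ∑ i, ((m : ℂ) + 1) *
      (Complex.log (1 - q ^ (m + 1) * v * x i) - Complex.log (1 - q ^ (m + 1) * v⁻¹ * x i))
  -- norm computations
  have hna : ∀ (z : ℂ) (m : ℕ), ‖q ^ (m + 1) * z‖ = ‖q‖ ^ m * ‖q * z‖ := by
    intro z m
    have : q ^ (m + 1) * z = q ^ m * (q * z) := by ring
    rw [this, norm_mul, norm_pow]
  have hqle : ∀ m : ℕ, ‖q‖ ^ m ≤ 1 := fun m => pow_le_one₀ (norm_nonneg q) hq1.le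
  have hlt : ∀ (z : ℂ) (m : ℕ), ‖q * z‖ < 1 → ‖q ^ (m + 1) * z‖ < 1 := by
    intro z m hz
    rw [hna]
    calc ‖q‖ ^ m * ‖q * z‖ ≤ 1 * ‖q * z‖ :=
          mul_le_mul_of_nonneg_right (hqle m) (norm_nonneg _)
      _ < 1 := by rw [one_mul]; exact hz
  have hlta : ∀ m i, ‖q ^ (m + 1) * v * x i‖ < 1 := by
    intro m i
    have := hlt (v * x i) m (by rw [← mul_assoc]; exact hx1 i)
    rwa [← mul_assoc] at this
  have hltb : ∀ m i, ‖q ^ (m + 1) * v⁻¹ * x i‖ < 1 := by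
    intro m i
    have := hlt (v⁻¹ * x i) m (by rw [← mul_assoc]; exact hx2 i)
    rwa [← mul_assoc] at this
  have h1z : ∀ z : ℂ, ‖z‖ < 1 → (1 : ℂ) - z ≠ 0 := by
    intro z hz h
    rw [sub_eq_zero] at h
    rw [← h] at hz
    simp at hz
  -- summability of the double series in norm
  have hu : Summable (fun m : ℕ => ((m : ℝ) + 1) * ‖q‖ ^ m) := by
    have hq1' : ‖(‖q‖)‖ < 1 := by
      rw [Real.norm_eq_abs, abs_of_nonneg (norm_nonneg q)]; exact hq1
    have h1 := (hasSum_coe_mul_geometric_of_norm_lt_one hq1').summable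
    have h2 := summable_geometric_of_lt_one (norm_nonneg q) hq1
    exact (h1.add h2).congr fun m => by push_cast; ring
  have hw : Summable (fun d : ℕ =>
      ∑ i, (‖q * v * x i‖ ^ (d + 1) + ‖q * v⁻¹ * x i‖ ^ (d + 1))) := by
    apply summable_sum
    intro i _
    have h1 : Summable (fun d : ℕ => ‖q * v * x i‖ ^ (d + 1)) := by
      have := (summable_geometric_of_lt_one (norm_nonneg _) (hx1 i)).mul_right ‖q * v * x i‖
      exact this.congr fun d => by rw [← pow_succ]
    have h2 : Summable (fun d : ℕ => ‖q * v⁻¹ * x i‖ ^ (d + 1)) := by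
      have := (summable_geometric_of_lt_one (norm_nonneg _) (hx2 i)).mul_right ‖q * v⁻¹ * x i‖
      exact this.congr fun d => by rw [← pow_succ]
    exact h1.add h2
  have hbound : ∀ p : ℕ × ℕ, ‖F p‖ ≤
      (∑ i, (‖q * v * x i‖ ^ (p.1 + 1) + ‖q * v⁻¹ * x i‖ ^ (p.1 + 1))) *
        (((p.2 : ℝ) + 1) * ‖q‖ ^ p.2) := by
    rintro ⟨d, m⟩
    show ‖((m : ℂ) + 1) / ((d : ℂ) + 1) *
      ∑ i, ((q ^ (m + 1) * v⁻¹ * x i) ^ (d + 1) - (q ^ (m + 1) * v * x i) ^ (d + 1))‖ ≤ _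
    have e1 : ‖((m : ℂ) + 1)‖ = (m : ℝ) + 1 := by
      rw [show ((m : ℂ) + 1) = ((m + 1 : ℕ) : ℂ) by push_cast; ring, Complex.norm_natCast]
      push_cast; ring
    have e2 : (1 : ℝ) ≤ ‖((d : ℂ) + 1)‖ := by
      rw [show ((d : ℂ) + 1) = ((d + 1 : ℕ) : ℂ) by push_cast; ring, Complex.norm_natCast]
      exact_mod_cast Nat.one_le_iff_ne_zero.mpr (Nat.succ_ne_zero d)
    have hcoef : ‖((m : ℂ) + 1) / ((d : ℂ) + 1)‖ ≤ (m : ℝ) + 1 := by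
      rw [norm_div, e1]
      exact div_le_self (by positivity) e2
    have hpw : ∀ z : ℂ, ‖(q ^ (m + 1) * z) ^ (d + 1)‖ ≤ ‖q‖ ^ m * ‖q * z‖ ^ (d + 1) := by
      intro z
      rw [norm_pow, hna, mul_pow, ← pow_mul]
      refine mul_le_mul_of_nonneg_right ?_ (pow_nonneg (norm_nonneg _) _)
      exact pow_le_pow_of_le_one (norm_nonneg q) hq1.le (Nat.le_mul_of_pos_right m (Nat.succ_pos d))
    have hterm : ∀ i : Fin N,
        ‖(q ^ (m + 1) * v⁻¹ * x i) ^ (d + 1) - (q ^ (m + 1) * v * x i) ^ (d + 1)‖ ≤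
          ‖q‖ ^ m * (‖q * v * x i‖ ^ (d + 1) + ‖q * v⁻¹ * x i‖ ^ (d + 1)) := by
      intro i
      have hb' := hpw (v⁻¹ * x i)
      have ha' := hpw (v * x i)
      rw [← mul_assoc] at hb' ha'
      calc ‖(q ^ (m + 1) * v⁻¹ * x i) ^ (d + 1) - (q ^ (m + 1) * v * x i) ^ (d + 1)‖
          ≤ ‖(q ^ (m + 1) * v⁻¹ * x i) ^ (d + 1)‖ + ‖(q ^ (m + 1) * v * x i) ^ (d + 1)‖ :=
            norm_sub_le _ _
        _ ≤ ‖q‖ ^ m * ‖q * v⁻¹ * x i‖ ^ (d + 1) + ‖q‖ ^ m * ‖q * v * x i‖ ^ (d + 1) := by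
            have hb'' : ‖(q ^ (m + 1) * v⁻¹ * x i) ^ (d + 1)‖ ≤
                ‖q‖ ^ m * ‖q * v⁻¹ * x i‖ ^ (d + 1) := by
              calc ‖(q ^ (m + 1) * v⁻¹ * x i) ^ (d + 1)‖
                  = ‖(q ^ (m + 1) * (v⁻¹ * x i)) ^ (d + 1)‖ := by rw [← mul_assoc]
                _ ≤ ‖q‖ ^ m * ‖q * (v⁻¹ * x i)‖ ^ (d + 1) := hpw _
                _ = ‖q‖ ^ m * ‖q * v⁻¹ * x i‖ ^ (d + 1) := by rw [← mul_assoc]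
            have ha'' : ‖(q ^ (m + 1) * v * x i) ^ (d + 1)‖ ≤
                ‖q‖ ^ m * ‖q * v * x i‖ ^ (d + 1) := by
              calc ‖(q ^ (m + 1) * v * x i) ^ (d + 1)‖
                  = ‖(q ^ (m + 1) * (v * x i)) ^ (d + 1)‖ := by rw [← mul_assoc]
                _ ≤ ‖q‖ ^ m * ‖q * (v * x i)‖ ^ (d + 1) := hpw _
                _ = ‖q‖ ^ m * ‖q * v * x i‖ ^ (d + 1) := by rw [← mul_assoc]
            exact add_le_add hb'' ha''
        _ = ‖q‖ ^ m * (‖q * v * x i‖ ^ (d + 1) + ‖q * v⁻¹ * x i‖ ^ (d + 1)) := by ring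
    calc ‖((m : ℂ) + 1) / ((d : ℂ) + 1) *
          ∑ i, ((q ^ (m + 1) * v⁻¹ * x i) ^ (d + 1) - (q ^ (m + 1) * v * x i) ^ (d + 1))‖
        = ‖((m : ℂ) + 1) / ((d : ℂ) + 1)‖ *
            ‖∑ i, ((q ^ (m + 1) * v⁻¹ * x i) ^ (d + 1) - (q ^ (m + 1) * v * x i) ^ (d + 1))‖ :=
          norm_mul _ _
      _ ≤ ((m : ℝ) + 1) *
            ∑ i, (‖q‖ ^ m * (‖q * v * x i‖ ^ (d + 1) + ‖q * v⁻¹ * x i‖ ^ (d + 1))) := by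
          refine mul_le_mul hcoef ((norm_sum_le _ _).trans (Finset.sum_le_sum fun i _ => hterm i))
            (norm_nonneg _) (by positivity)
      _ = (∑ i, (‖q * v * x i‖ ^ (d + 1) + ‖q * v⁻¹ * x i‖ ^ (d + 1))) *
            (((m : ℝ) + 1) * ‖q‖ ^ m) := by
          rw [← Finset.mul_sum]; ring
  have hFn : Summable (fun p : ℕ × ℕ => ‖F p‖) := by
    refine Summable.of_nonneg_of_le (fun p => norm_nonneg _) hbound ?_
    exact hw.mul_of_nonneg hu (fun d => by positivity) (fun m => by positivity)
  have hF : Summable F := hFn.of_norm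
  -- row sums: for fixed d, summing over m gives the original series term
  have hd : ∀ d : ℕ, HasSum (fun m => F (d, m))
      (1 / ((d : ℂ) + 1) * ((v⁻¹) ^ (d + 1) - v ^ (d + 1)) *
        (q ^ (d + 1) / (1 - q ^ (d + 1)) ^ 2) * ∑ i, x i ^ (d + 1)) := by
    intro d
    have hr : ‖q ^ (d + 1)‖ < 1 := by
      rw [norm_pow]
      exact pow_lt_one₀ (norm_nonneg q) hq1 (Nat.succ_ne_zero d)
    have base := hasSum_coe_mul_geometric_of_norm_lt_one hr
    have shift : HasSum (fun m : ℕ => ((m + 1 : ℕ) : ℂ) * (q ^ (d + 1)) ^ (m + 1))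
        (q ^ (d + 1) / (1 - q ^ (d + 1)) ^ 2) :=
      (hasSum_nat_add_iff (f := fun n : ℕ => (n : ℂ) * (q ^ (d + 1)) ^ n) 1).mpr (by simpa using base)
    set C : ℂ := ∑ i, ((v⁻¹ * x i) ^ (d + 1) - (v * x i) ^ (d + 1)) with hC_def
    have h2 := shift.mul_right (1 / ((d : ℂ) + 1) * C)
    have hfun : (fun m : ℕ => ((m + 1 : ℕ) : ℂ) * (q ^ (d + 1)) ^ (m + 1) *
        (1 / ((d : ℂ) + 1) * C)) = fun m => F (d, m) := by
      funext m
      have hq' : (q ^ (m + 1)) ^ (d + 1) = (q ^ (d + 1)) ^ (m + 1) := by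
        rw [← pow_mul, ← pow_mul, Nat.mul_comm]
      have hsummand : ∀ i : Fin N,
          (q ^ (m + 1) * v⁻¹ * x i) ^ (d + 1) - (q ^ (m + 1) * v * x i) ^ (d + 1)
            = (q ^ (d + 1)) ^ (m + 1) * ((v⁻¹ * x i) ^ (d + 1) - (v * x i) ^ (d + 1)) := by
        intro i
        rw [mul_assoc, mul_assoc, mul_pow, mul_pow, hq']
        ring
      show ((m + 1 : ℕ) : ℂ) * (q ^ (d + 1)) ^ (m + 1) * (1 / ((d : ℂ) + 1) * C)
          = ((m : ℂ) + 1) / ((d : ℂ) + 1) *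
            ∑ i, ((q ^ (m + 1) * v⁻¹ * x i) ^ (d + 1) - (q ^ (m + 1) * v * x i) ^ (d + 1))
      rw [Finset.sum_congr rfl fun i _ => hsummand i, ← Finset.mul_sum, ← hC_def]
      push_cast
      ring
    have h3 : HasSum (fun m => F (d, m))
        (q ^ (d + 1) / (1 - q ^ (d + 1)) ^ 2 * (1 / ((d : ℂ) + 1) * C)) := hfun ▸ h2
    have hC : C = ((v⁻¹) ^ (d + 1) - v ^ (d + 1)) * ∑ i, x i ^ (d + 1) := by
      rw [hC_def, Finset.mul_sum]
      exact Finset.sum_congr rfl fun i _ => by rw [mul_pow, mul_pow]; ring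
    convert h3 using 1
    rw [hC]
    ring
  -- column sums: for fixed m, summing over d gives the log term
  have hlog : ∀ z : ℂ, ‖z‖ < 1 →
      HasSum (fun d : ℕ => z ^ (d + 1) / ((d : ℂ) + 1)) (-Complex.log (1 - z)) := by
    intro z hz
    have h2 : HasSum (fun n : ℕ => z ^ (n + 1) / ((n + 1 : ℕ) : ℂ)) (-Complex.log (1 - z)) :=
      (hasSum_nat_add_iff (f := fun n : ℕ => z ^ n / (n : ℂ)) 1).mpr
        (by simpa using Complex.hasSum_taylorSeries_neg_log hz)
    have he : (fun n : ℕ => z ^ (n + 1) / ((n + 1 : ℕ) : ℂ))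
        = fun d : ℕ => z ^ (d + 1) / ((d : ℂ) + 1) := by
      funext n; push_cast; ring
    exact he ▸ h2
  have hm : ∀ m : ℕ, HasSum (fun d => F (d, m)) (g m) := by
    intro m
    have hi : ∀ i : Fin N, HasSum
        (fun d : ℕ => ((m : ℂ) + 1) *
          ((q ^ (m + 1) * v⁻¹ * x i) ^ (d + 1) / ((d : ℂ) + 1)
            - (q ^ (m + 1) * v * x i) ^ (d + 1) / ((d : ℂ) + 1)))
        (((m : ℂ) + 1) *
          (Complex.log (1 - q ^ (m + 1) * v * x i)
            - Complex.log (1 - q ^ (m + 1) * v⁻¹ * x i))) := by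
      intro i
      have hb' := hlog _ (hltb m i)
      have ha' := hlog _ (hlta m i)
      have := (hb'.sub ha').mul_left ((m : ℂ) + 1)
      convert this using 1
      all_goals first | rfl | ring
    have hs := hasSum_sum (fun i (_ : i ∈ Finset.univ) => hi i)
    have hfe : (fun d : ℕ => ∑ i, ((m : ℂ) + 1) *
        ((q ^ (m + 1) * v⁻¹ * x i) ^ (d + 1) / ((d : ℂ) + 1)
          - (q ^ (m + 1) * v * x i) ^ (d + 1) / ((d : ℂ) + 1)))
        = fun d => F (d, m) := by
      funext d
      show _ = ((m : ℂ) + 1) / ((d : ℂ) + 1) *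
          ∑ i, ((q ^ (m + 1) * v⁻¹ * x i) ^ (d + 1) - (q ^ (m + 1) * v * x i) ^ (d + 1))
      rw [Finset.mul_sum]
      exact Finset.sum_congr rfl fun i _ => by ring
    exact hfe ▸ hs
  -- assemble via Fubini
  have hsum1 : HasSum (fun d : ℕ =>
      1 / ((d : ℂ) + 1) * ((v⁻¹) ^ (d + 1) - v ^ (d + 1)) *
        (q ^ (d + 1) / (1 - q ^ (d + 1)) ^ 2) * ∑ i, x i ^ (d + 1)) (∑' p, F p) :=
    hF.hasSum.prod_fiberwise hd
  have hswap : Summable (fun p : ℕ × ℕ => F p.swap) := hF.prod_symm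
  have hswap_eq : ∑' p : ℕ × ℕ, F p.swap = ∑' p, F p := by
    simpa using (Equiv.prodComm ℕ ℕ).tsum_eq F
  have hsum2 : HasSum g (∑' p, F p) := by
    have := hswap.hasSum.prod_fiberwise (g := g) (fun m => hm m)
    rwa [hswap_eq] at this
  have hprod : HasProd (fun m => Complex.exp (g m)) (Complex.exp (∑' p, F p)) := hsum2.cexp
  -- identify the product terms
  have hterm : ∀ m : ℕ, Complex.exp (g m)
      = ∏ i, ((1 - q ^ (m + 1) * v * x i) / (1 - q ^ (m + 1) * v⁻¹ * x i)) ^ (m + 1) := by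
    intro m
    rw [show g m = ∑ i, ((m : ℂ) + 1) *
      (Complex.log (1 - q ^ (m + 1) * v * x i) - Complex.log (1 - q ^ (m + 1) * v⁻¹ * x i)) from rfl,
      Complex.exp_sum]
    refine Finset.prod_congr rfl fun i _ => ?_
    rw [show ((m : ℂ) + 1) = ((m + 1 : ℕ) : ℂ) by push_cast; ring, Complex.exp_nat_mul,
      Complex.exp_sub, Complex.exp_log (h1z _ (hlta m i)), Complex.exp_log (h1z _ (hltb m i))]
  have hprodfun : (fun m : ℕ =>
      ∏ i, ((1 - q ^ (m + 1) * v * x i) / (1 - q ^ (m + 1) * v⁻¹ * x i)) ^ (m + 1))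
      = fun m => Complex.exp (g m) := by
    funext m; rw [hterm]
  refine ⟨?_, ?_, ?_⟩
  · -- absolute convergence of the series
    have hnorm : HasSum (fun d : ℕ => ∑' m, ‖F (d, m)‖) (∑' p, ‖F p‖) :=
      hFn.hasSum.prod_fiberwise fun d => (hFn.prod_factor d).hasSum
    refine hnorm.summable.of_nonneg_of_le (fun d => norm_nonneg _) (fun d => ?_)
    rw [← (hd d).tsum_eq]
    exact norm_tsum_le_tsum_norm (hFn.prod_factor d)
  · rw [hprodfun]
    exact hprod.multipliable
  · rw [hsum1.tsum_eq, hprodfun, hprod.tprod_eq]
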